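/- Let K be an ε-AC-like set (every v ∈ K has |N(v)∩K| ≥ (1-ε)|K|), and suppose ε + ε' < 1/4. If T is an ε'-AC-preserved bucket of a k-bucketing of K, then T 2-hop connects K: for all u, v ∈ K, |N(u) ∩ N(v) ∩ T| ≥ (1 - 4ε - 4ε')|T| > 0. -/

import Mathlib

open scoped Classical

set_option maxHeartbeats 2000000 in
/-- if `ε + ε' < 1/4`, an ε'-AC-preserved bucket `T` of a k-bucketing of an
ε-AC-like set `K` 2-hop connects `K`: every pair `u, v ∈ K` has
`|N(u) ∩ N(v) ∩ T| ≥ (1 - 4ε - 4ε')|T| > 0`. -/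
theorem stmt7 {V : Type*} [Fintype V] [DecidableEq V] (G : SimpleGraph V)
    [DecidableRel G.Adj] (ε ε' : ℝ) (hε : 0 < ε) (hε' : 0 < ε')
    (hsum : ε + ε' < 1/4) (K T : Finset V) (hTK : T ⊆ K) (k : ℕ) (hk : 1 ≤ k)
    (hAC : ∀ v ∈ K, (1 - ε) * K.card ≤ ((G.neighborFinset v ∩ K).card : ℝ))
    (hpres : ∀ v ∈ K,
      (1 - ε') * ((G.neighborFinset v ∩ K).card : ℝ) / k ≤
          ((G.neighborFinset v ∩ T).card : ℝ) ∧
        ((G.neighborFinset v ∩ T).card : ℝ) ≤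
          (1 + ε') * ((G.neighborFinset v ∩ K).card : ℝ) / k) :
    ∀ u ∈ K, ∀ v ∈ K,
      (1 - 4 * ε - 4 * ε') * T.card ≤
          ((G.neighborFinset u ∩ G.neighborFinset v ∩ T).card : ℝ) ∧
        0 < ((G.neighborFinset u ∩ G.neighborFinset v ∩ T).card : ℝ) := by
  intro u hu v hv
  have hKne : K.Nonempty := ⟨u, hu⟩
  have hn1 : (1 : ℝ) ≤ (K.card : ℝ) := by
    exact_mod_cast Finset.card_pos.mpr hKne
  have hn0 : (0 : ℝ) < (K.card : ℝ) := lt_of_lt_of_le one_pos hn1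
  have hk1 : (1 : ℝ) ≤ (k : ℝ) := by exact_mod_cast hk
  have hk0 : (0 : ℝ) < (k : ℝ) := lt_of_lt_of_le one_pos hk1
  have hε1 : ε < 1 := by linarith
  have hε'1 : ε' < 1 := by linarith
  have ht0 : (0:ℝ) ≤ (T.card : ℝ) := Nat.cast_nonneg _
  -- double counting (in ℕ)
  have hfilter : ∀ (x : V) (A : Finset V),
      G.neighborFinset x ∩ A = A.filter (fun w => G.Adj x w) := by
    intro x A
    ext w
    simp [SimpleGraph.mem_neighborFinset, and_comm]
  have hswN : ∑ x ∈ K, (G.neighborFinset x ∩ T).card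
      = ∑ w ∈ T, (G.neighborFinset w ∩ K).card := by
    simp only [hfilter, Finset.card_filter]
    rw [Finset.sum_comm]
    apply Finset.sum_congr rfl
    intro w _
    apply Finset.sum_congr rfl
    intro x _
    simp [G.adj_comm]
  have hsw : ∑ x ∈ K, ((G.neighborFinset x ∩ T).card : ℝ)
      = ∑ w ∈ T, ((G.neighborFinset w ∩ K).card : ℝ) := by
    exact_mod_cast congrArg (Nat.cast : ℕ → ℝ) hswN
  -- upper bound on (T.card : ℝ) := |T|
  have hlb : (T.card : ℝ) * ((1 - ε) * (K.card : ℝ))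
      ≤ ∑ w ∈ T, ((G.neighborFinset w ∩ K).card : ℝ) := by
    calc (T.card : ℝ) * ((1 - ε) * (K.card : ℝ))
        = ∑ _w ∈ T, (1 - ε) * (K.card : ℝ) := by
          rw [Finset.sum_const, nsmul_eq_mul]
      _ ≤ ∑ w ∈ T, ((G.neighborFinset w ∩ K).card : ℝ) :=
          Finset.sum_le_sum (fun w hw => hAC w (hTK hw))
  have hub : ∑ x ∈ K, ((G.neighborFinset x ∩ T).card : ℝ)
      ≤ (K.card : ℝ) * ((1 + ε') * (K.card : ℝ) / k) := by
    calc ∑ x ∈ K, ((G.neighborFinset x ∩ T).card : ℝ)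
        ≤ ∑ x ∈ K, (1 + ε') * ((G.neighborFinset x ∩ K).card : ℝ) / k := by
          apply Finset.sum_le_sum
          intro x hx
          exact (hpres x hx).2
      _ ≤ ∑ _x ∈ K, (1 + ε') * (K.card : ℝ) / k := by
          apply Finset.sum_le_sum
          intro x hx
          have hcard : ((G.neighborFinset x ∩ K).card : ℝ) ≤ (K.card : ℝ) :=
            Nat.cast_le.mpr (Finset.card_le_card (Finset.inter_subset_right))
          gcongr
      _ = (K.card : ℝ) * ((1 + ε') * (K.card : ℝ) / k) := by
          rw [Finset.sum_const, nsmul_eq_mul]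
  have hT_ub : (T.card : ℝ) * ((1 - ε) * (K.card : ℝ) * k) ≤ (1 + ε') * (K.card : ℝ) * (K.card : ℝ) := by
    have h : (T.card : ℝ) * ((1 - ε) * (K.card : ℝ)) ≤ (K.card : ℝ) * ((1 + ε') * (K.card : ℝ) / k) := hlb.trans (hsw ▸ hub)
    have h' := mul_le_mul_of_nonneg_right h hk0.le
    have e : (K.card : ℝ) * ((1 + ε') * (K.card : ℝ) / k) * k = (1 + ε') * (K.card : ℝ) * (K.card : ℝ) := by
      field_simp
    rw [e] at h'
    linarith [h']
  -- each vertex of K has many neighbors in T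
  have key : ∀ x ∈ K, (1 - 2*ε - 2*ε') * (T.card : ℝ) ≤ ((G.neighborFinset x ∩ T).card : ℝ) := by
    intro x hx
    set A : ℝ := ((G.neighborFinset x ∩ T).card : ℝ) with hA
    have h1 := (hpres x hx).1
    have h2 := hAC x hx
    have h3 : (1 - ε') * ((1 - ε) * (K.card : ℝ)) ≤ A * k := by
      have : (1 - ε') * ((1 - ε) * (K.card : ℝ)) / k ≤ (1 - ε') * ((G.neighborFinset x ∩ K).card : ℝ) / k := by
        gcongr
      have h4 := this.trans h1
      rw [div_le_iff₀ hk0] at h4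
      linarith
    -- combine: (T.card : ℝ)*(1-ε)^2*(1-ε')*(K.card : ℝ)*k ≤ (1+ε')*(K.card : ℝ)*(A*k)
    have c1 : ((1 - ε) * (1 - ε')) * ((T.card : ℝ) * ((1 - ε) * (K.card : ℝ) * k))
        ≤ ((1 - ε) * (1 - ε')) * ((1 + ε') * (K.card : ℝ) * (K.card : ℝ)) :=
      mul_le_mul_of_nonneg_left hT_ub (by nlinarith)
    have c2 : ((1 + ε') * (K.card : ℝ)) * ((1 - ε') * ((1 - ε) * (K.card : ℝ)))
        ≤ ((1 + ε') * (K.card : ℝ)) * (A * k) :=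
      mul_le_mul_of_nonneg_left h3 (by nlinarith)
    have c3 : ((1 - ε) * (1 - ε')) * ((1 + ε') * (K.card : ℝ) * (K.card : ℝ))
        = ((1 + ε') * (K.card : ℝ)) * ((1 - ε') * ((1 - ε) * (K.card : ℝ))) := by ring
    have c4 : ((T.card : ℝ) * ((1 - ε)^2 * (1 - ε'))) * ((K.card : ℝ) * k) ≤ ((1 + ε') * A) * ((K.card : ℝ) * k) := by
      calc ((T.card : ℝ) * ((1 - ε)^2 * (1 - ε'))) * ((K.card : ℝ) * k)
          = ((1 - ε) * (1 - ε')) * ((T.card : ℝ) * ((1 - ε) * (K.card : ℝ) * k)) := by ring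
        _ ≤ ((1 - ε) * (1 - ε')) * ((1 + ε') * (K.card : ℝ) * (K.card : ℝ)) := c1
        _ = ((1 + ε') * (K.card : ℝ)) * ((1 - ε') * ((1 - ε) * (K.card : ℝ))) := by ring
        _ ≤ ((1 + ε') * (K.card : ℝ)) * (A * k) := c2
        _ = ((1 + ε') * A) * ((K.card : ℝ) * k) := by ring
    have c5 : (T.card : ℝ) * ((1 - ε)^2 * (1 - ε')) ≤ (1 + ε') * A :=
      le_of_mul_le_mul_right c4 (mul_pos hn0 hk0)
    have hpoly : (1 - 2*ε - 2*ε') * (1 + ε') ≤ (1 - ε)^2 * (1 - ε') := by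
      nlinarith [mul_pos hε hε', sq_nonneg ε', mul_nonneg (sq_nonneg ε) (by linarith : (0:ℝ) ≤ 1 - ε')]
    have c7 : (1 + ε') * ((1 - 2*ε - 2*ε') * (T.card : ℝ)) ≤ (1 + ε') * A := by
      have c6 : ((1 - 2*ε - 2*ε') * (1 + ε')) * (T.card : ℝ) ≤ ((1 - ε)^2 * (1 - ε')) * (T.card : ℝ) :=
        mul_le_mul_of_nonneg_right hpoly ht0
      have e1 : (1 + ε') * ((1 - 2*ε - 2*ε') * (T.card : ℝ))
          = ((1 - 2*ε - 2*ε') * (1 + ε')) * (T.card : ℝ) := by ring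
      have e2 : ((1 - ε)^2 * (1 - ε')) * (T.card : ℝ)
          = (T.card : ℝ) * ((1 - ε)^2 * (1 - ε')) := by ring
      linarith
    exact le_of_mul_le_mul_left c7 (by linarith)
  -- T is nonempty via x = u
  have hNuT_pos : (0:ℝ) < ((G.neighborFinset u ∩ T).card : ℝ) := by
    have h1 := (hpres u hu).1
    have h2 := hAC u hu
    have hB : (0:ℝ) < ((G.neighborFinset u ∩ K).card : ℝ) :=
      lt_of_lt_of_le (mul_pos (by linarith : (0:ℝ) < 1 - ε) hn0) h2
    have : (0:ℝ) < (1 - ε') * ((G.neighborFinset u ∩ K).card : ℝ) / k :=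
      div_pos (mul_pos (by linarith : (0:ℝ) < 1 - ε') hB) hk0
    linarith
  have hT_pos : (0:ℝ) < (T.card : ℝ) := by
    have : ((G.neighborFinset u ∩ T).card : ℝ) ≤ (T.card : ℝ) := by
      exact_mod_cast Finset.card_le_card (Finset.inter_subset_right)
    linarith
  -- inclusion-exclusion
  have hie : ((G.neighborFinset u ∩ T).card : ℝ) + ((G.neighborFinset v ∩ T).card : ℝ)
      - (T.card : ℝ) ≤ ((G.neighborFinset u ∩ G.neighborFinset v ∩ T).card : ℝ) := by
    have hunion : (G.neighborFinset u ∩ T) ∪ (G.neighborFinset v ∩ T) ⊆ T :=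
      Finset.union_subset Finset.inter_subset_right Finset.inter_subset_right
    have hinter : (G.neighborFinset u ∩ T) ∩ (G.neighborFinset v ∩ T)
        = G.neighborFinset u ∩ G.neighborFinset v ∩ T := by
      ext w
      simp only [Finset.mem_inter]
      constructor
      · rintro ⟨⟨ha, hb⟩, hc, -⟩
        exact ⟨⟨ha, hc⟩, hb⟩
      · rintro ⟨⟨ha, hc⟩, hb⟩
        exact ⟨⟨ha, hb⟩, hc, hb⟩
    have h := Finset.card_inter_add_card_union (G.neighborFinset u ∩ T) (G.neighborFinset v ∩ T)
    have h2 := Finset.card_le_card hunion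
    rw [hinter] at h
    have hcast : ((G.neighborFinset u ∩ G.neighborFinset v ∩ T).card : ℝ)
        + (((G.neighborFinset u ∩ T) ∪ (G.neighborFinset v ∩ T)).card : ℝ)
        = ((G.neighborFinset u ∩ T).card : ℝ) + ((G.neighborFinset v ∩ T).card : ℝ) := by
      exact_mod_cast h
    have h2' : (((G.neighborFinset u ∩ T) ∪ (G.neighborFinset v ∩ T)).card : ℝ) ≤ (T.card : ℝ) := by
      exact_mod_cast h2
    linarith
  have hu' := key u hu
  have hv' := key v hv
  constructor
  · linarith
  · have hpos : (0:ℝ) < (1 - 4*ε - 4*ε') * (T.card : ℝ) := by nlinarith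
    linarith
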